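/- arXiv:1405.5576 — 4 statements merged into one kernel-verified Lean document; each statement's English description precedes it below -/
import Mathlib

section
/- Let g(Δ) = −log det(Δ + P*) be defined on the set F = {Δ symmetric : a·I ⪯ Δ + P* ⪯ b·I} with 0 < a ≤ b < ∞. Then for every Δ ∈ F, g(Δ) − g(0) ≥ −⟨(P*)^{-1}, Δ⟩ + (1/(2b²))‖Δ‖_F², where ⟨X,Y⟩ = Tr(XᵀY) and ‖·‖_F is the Frobenius norm. -/
open Matrix
-- scalar lemma
private lemma scalar_key {b lam mu : ℝ} (hb : 0 < b)
    (hl0 : 0 < lam) (hlb : lam ≤ b) (hm0 : 0 < mu) (hmb : mu ≤ b) :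
    0 ≤ Real.log lam - Real.log mu + lam⁻¹ * mu - 1 - (mu - lam)^2 / (2 * b^2) := by
  set F : ℝ → ℝ := fun x => Real.log lam - Real.log x + lam⁻¹ * x - 1 - (x - lam)^2 / (2*b^2)
    with hFdef
  have hderiv : ∀ x : ℝ, 0 < x →
      HasDerivAt F ((x - lam) * (b^2 - lam*x) / (lam * x * b^2)) x := by
    intro x hx
    have h1 : HasDerivAt (fun y : ℝ => Real.log lam - Real.log y) (-x⁻¹) x :=
      (Real.hasDerivAt_log (ne_of_gt hx)).const_sub _
    have h2 : HasDerivAt (fun y : ℝ => lam⁻¹ * y) lam⁻¹ x := by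
      simpa using (hasDerivAt_id x).const_mul lam⁻¹
    have h3 : HasDerivAt (fun y : ℝ => (y - lam)^2 / (2*b^2))
        (2*(x-lam)/(2*b^2)) x := by
      have := ((hasDerivAt_id x).sub_const lam).pow 2
      simpa using this.div_const (2*b^2)
    have h := ((h1.add h2).sub_const 1).sub h3
    have e : (x - lam) * (b^2 - lam*x) / (lam * x * b^2) = -x⁻¹ + lam⁻¹ - 2 * (x - lam) / (2 * b ^ 2) := by
      field_simp
      ring
    rw [e]
    exact h
  have hF0 : F lam = 0 := by
    simp only [hFdef, sub_self, inv_mul_cancel₀ (ne_of_gt hl0)]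
    norm_num
  have hmain : 0 ≤ F mu := by
    rcases le_total lam mu with hc | hc
    · have mono : MonotoneOn F (Set.Icc lam b) := by
        apply monotoneOn_of_deriv_nonneg (convex_Icc _ _)
        · intro x hx
          exact ((hderiv x (lt_of_lt_of_le hl0 hx.1)).differentiableAt).continuousAt.continuousWithinAt
        · intro x hx
          rw [interior_Icc] at hx
          exact ((hderiv x (lt_trans hl0 hx.1)).differentiableAt).differentiableWithinAt
        · intro x hx
          rw [interior_Icc] at hx
          rw [(hderiv x (lt_trans hl0 hx.1)).deriv]
          apply div_nonneg
          · apply mul_nonneg (by linarith [hx.1])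
            nlinarith [hx.2, hx.1]
          · exact le_of_lt (mul_pos (mul_pos hl0 (lt_trans hl0 hx.1)) (pow_pos hb 2))
      have := mono (Set.mem_Icc.mpr ⟨le_refl _, hlb⟩) (Set.mem_Icc.mpr ⟨hc, hmb⟩) hc
      linarith [hF0]
    · have anti : AntitoneOn F (Set.Icc mu lam) := by
        apply antitoneOn_of_deriv_nonpos (convex_Icc _ _)
        · intro x hx
          exact ((hderiv x (lt_of_lt_of_le hm0 hx.1)).differentiableAt).continuousAt.continuousWithinAt
        · intro x hx
          rw [interior_Icc] at hx
          exact ((hderiv x (lt_trans hm0 hx.1)).differentiableAt).differentiableWithinAt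
        · intro x hx
          rw [interior_Icc] at hx
          rw [(hderiv x (lt_trans hm0 hx.1)).deriv]
          apply div_nonpos_of_nonpos_of_nonneg
          · apply mul_nonpos_of_nonpos_of_nonneg (by linarith [hx.2])
            nlinarith [hx.1, hx.2]
          · exact le_of_lt (mul_pos (mul_pos hl0 (lt_trans hm0 hx.1)) (pow_pos hb 2))
      have := anti (Set.mem_Icc.mpr ⟨le_refl _, hc⟩) (Set.mem_Icc.mpr ⟨hc, le_refl _⟩) hc
      linarith [hF0]
  simpa [hFdef] using hmain

private lemma eig_mem {n : ℕ} {M : Matrix (Fin n) (Fin n) ℝ} (hM : M.IsHermitian) {a b : ℝ}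
    (hMa : (M - a • (1 : Matrix (Fin n) (Fin n) ℝ)).PosSemidef)
    (hMb : (b • (1 : Matrix (Fin n) (Fin n) ℝ) - M).PosSemidef) (i : Fin n) :
    a ≤ hM.eigenvalues i ∧ hM.eigenvalues i ≤ b := by
  set v : Fin n → ℝ := ⇑(hM.eigenvectorBasis i) with hv
  have hvnorm : star v ⬝ᵥ v = 1 := by
    have h1 : ‖hM.eigenvectorBasis i‖ = 1 := hM.eigenvectorBasis.orthonormal.1 i
    have h2 : (inner ℝ (hM.eigenvectorBasis i) (hM.eigenvectorBasis i) : ℝ) = 1 := by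
      rw [real_inner_self_eq_norm_sq, h1]; norm_num
    rwa [EuclideanSpace.inner_eq_star_dotProduct] at h2
  have hev : star v ⬝ᵥ (M *ᵥ v) = hM.eigenvalues i := by
    rw [hM.mulVec_eigenvectorBasis, dotProduct_smul, hvnorm, smul_eq_mul, mul_one]
  constructor
  · have h := hMa.dotProduct_mulVec_nonneg v
    rw [sub_mulVec, dotProduct_sub, hev, smul_mulVec, one_mulVec, dotProduct_smul,
      hvnorm, smul_eq_mul, mul_one] at h
    linarith
  · have h := hMb.dotProduct_mulVec_nonneg v
    rw [sub_mulVec, dotProduct_sub, hev, smul_mulVec, one_mulVec, dotProduct_smul,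
      hvnorm, smul_eq_mul, mul_one] at h
    linarith

private lemma trace_diag_conj {n : ℕ} (φ ψ : Fin n → ℝ) (W X : Matrix (Fin n) (Fin n) ℝ) :
    (diagonal φ * (W * (diagonal ψ * X))).trace = ∑ i, ∑ j, φ i * ψ j * (W i j * X j i) := by
  have entry : ∀ i : Fin n, (diagonal φ * (W * (diagonal ψ * X))) i i
      = ∑ j, φ i * ψ j * (W i j * X j i) := by
    intro i
    rw [Matrix.diagonal_mul, Matrix.mul_apply, Finset.mul_sum]
    refine Finset.sum_congr rfl fun j _ => ?_
    rw [Matrix.diagonal_mul]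
    ring
  simp only [Matrix.trace, Matrix.diag_apply]
  exact Finset.sum_congr rfl fun i _ => entry i

private lemma trace_conj_general {n : ℕ} (U V : Matrix (Fin n) (Fin n) ℝ) (φ ψ : Fin n → ℝ) :
    ((U * diagonal φ * Uᵀ) * (V * diagonal ψ * Vᵀ)).trace
      = ∑ i, ∑ j, φ i * ψ j * ((Uᵀ * V) i j)^2 := by
  have e1 : (U * diagonal φ * Uᵀ) * (V * diagonal ψ * Vᵀ)
      = U * (diagonal φ * ((Uᵀ * V) * (diagonal ψ * Vᵀ))) := by
    simp only [Matrix.mul_assoc]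
  have e2 : diagonal φ * ((Uᵀ * V) * (diagonal ψ * Vᵀ)) * U
      = diagonal φ * ((Uᵀ * V) * (diagonal ψ * (Vᵀ * U))) := by
    simp only [Matrix.mul_assoc]
  rw [e1, Matrix.trace_mul_comm, e2, trace_diag_conj]
  refine Finset.sum_congr rfl fun i _ => Finset.sum_congr rfl fun j _ => ?_
  have : (Vᵀ * U) j i = (Uᵀ * V) i j := by
    simp only [Matrix.mul_apply, Matrix.transpose_apply]
    exact Finset.sum_congr rfl fun k _ => mul_comm _ _
  rw [this]; ring


/-- strong convexity lower bound for `g(Δ) = -log det(Δ + P*)` on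
`F = {Δ symmetric : a·I ⪯ Δ + P* ⪯ b·I}` with `0 < a ≤ b`:
`g(Δ) - g(0) ≥ -⟨(P*)⁻¹, Δ⟩ + (1/(2b²))‖Δ‖_F²`. -/
theorem stmt_3 {n : ℕ} (Pstar : Matrix (Fin n) (Fin n) ℝ) (a b : ℝ)
    (ha : 0 < a) (hab : a ≤ b)
    (hPsymm : Pstar.IsSymm)
    (hPa : (Pstar - a • (1 : Matrix (Fin n) (Fin n) ℝ)).PosSemidef)
    (hPb : (b • (1 : Matrix (Fin n) (Fin n) ℝ) - Pstar).PosSemidef)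
    (Δ : Matrix (Fin n) (Fin n) ℝ) (hΔsymm : Δ.IsSymm)
    (hΔa : (Δ + Pstar - a • (1 : Matrix (Fin n) (Fin n) ℝ)).PosSemidef)
    (hΔb : (b • (1 : Matrix (Fin n) (Fin n) ℝ) - (Δ + Pstar)).PosSemidef) :
    -Real.log (Δ + Pstar).det - (-Real.log Pstar.det) ≥
      -((Pstar⁻¹)ᵀ * Δ).trace + (1 / (2 * b ^ 2)) * ∑ i, ∑ j, (Δ i j) ^ 2 := by
  have hb : 0 < b := lt_of_lt_of_le ha hab
  set Q : Matrix (Fin n) (Fin n) ℝ := Δ + Pstar with hQdef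
  have hP : Pstar.IsHermitian := by
    rw [Matrix.IsHermitian, Matrix.conjTranspose_eq_transpose_of_trivial]; exact hPsymm.eq
  have hQ : Q.IsHermitian := by
    rw [Matrix.IsHermitian, Matrix.conjTranspose_eq_transpose_of_trivial, hQdef,
      Matrix.transpose_add, hΔsymm.eq, hPsymm.eq]
  set lam : Fin n → ℝ := hP.eigenvalues with hlamdef
  set mu : Fin n → ℝ := hQ.eigenvalues with hmudef
  have hlam_pos : ∀ i, 0 < lam i := fun i => lt_of_lt_of_le ha (eig_mem hP hPa hPb i).1
  have hlam_le : ∀ i, lam i ≤ b := fun i => (eig_mem hP hPa hPb i).2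
  have hmu_pos : ∀ j, 0 < mu j := fun j => lt_of_lt_of_le ha (eig_mem hQ hΔa hΔb j).1
  have hmu_le : ∀ j, mu j ≤ b := fun j => (eig_mem hQ hΔa hΔb j).2
  set U : Matrix (Fin n) (Fin n) ℝ := (hP.eigenvectorUnitary : Matrix (Fin n) (Fin n) ℝ) with hUdef
  set V : Matrix (Fin n) (Fin n) ℝ := (hQ.eigenvectorUnitary : Matrix (Fin n) (Fin n) ℝ) with hVdef
  have hU1 : Uᵀ * U = 1 := by
    have h := hP.eigenvectorUnitary.2
    rw [Unitary.mem_iff] at h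
    simpa [Matrix.star_eq_conjTranspose, Matrix.conjTranspose_eq_transpose_of_trivial] using h.1
  have hU2 : U * Uᵀ = 1 := by
    have h := hP.eigenvectorUnitary.2
    rw [Unitary.mem_iff] at h
    simpa [Matrix.star_eq_conjTranspose, Matrix.conjTranspose_eq_transpose_of_trivial] using h.2
  have hV1 : Vᵀ * V = 1 := by
    have h := hQ.eigenvectorUnitary.2
    rw [Unitary.mem_iff] at h
    simpa [Matrix.star_eq_conjTranspose, Matrix.conjTranspose_eq_transpose_of_trivial] using h.1
  have hV2 : V * Vᵀ = 1 := by
    have h := hQ.eigenvectorUnitary.2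
    rw [Unitary.mem_iff] at h
    simpa [Matrix.star_eq_conjTranspose, Matrix.conjTranspose_eq_transpose_of_trivial] using h.2
  have hPspec : Pstar = U * diagonal lam * Uᵀ := by
    have h := hP.spectral_theorem
    rwa [Unitary.conjStarAlgAut_apply, Matrix.star_eq_conjTranspose, Matrix.conjTranspose_eq_transpose_of_trivial,
      show (RCLike.ofReal ∘ hP.eigenvalues : Fin n → ℝ) = lam from rfl] at h
  have hQspec : Q = V * diagonal mu * Vᵀ := by
    have h := hQ.spectral_theorem
    rwa [Unitary.conjStarAlgAut_apply, Matrix.star_eq_conjTranspose, Matrix.conjTranspose_eq_transpose_of_trivial,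
      show (RCLike.ofReal ∘ hQ.eigenvalues : Fin n → ℝ) = mu from rfl] at h
  set W : Matrix (Fin n) (Fin n) ℝ := Uᵀ * V with hWdef
  -- row and column sums of W i j ^ 2
  have hWWt : W * Wᵀ = 1 := by
    rw [hWdef, Matrix.transpose_mul, Matrix.transpose_transpose,
      show Uᵀ * V * (Vᵀ * U) = Uᵀ * (V * Vᵀ * U) from by simp only [Matrix.mul_assoc],
      hV2, Matrix.one_mul, hU1]
  have hWtW : Wᵀ * W = 1 := by
    rw [hWdef, Matrix.transpose_mul, Matrix.transpose_transpose,
      show Vᵀ * U * (Uᵀ * V) = Vᵀ * (U * Uᵀ * V) from by simp only [Matrix.mul_assoc],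
      hU2, Matrix.one_mul, hV1]
  have crow : ∀ i, ∑ j, (W i j)^2 = 1 := by
    intro i
    have h := congrFun (congrFun hWWt i) i
    rw [Matrix.mul_apply, Matrix.one_apply_eq] at h
    rw [← h]
    exact Finset.sum_congr rfl fun j _ => by rw [Matrix.transpose_apply, sq]
  have ccol : ∀ j, ∑ i, (W i j)^2 = 1 := by
    intro j
    have h := congrFun (congrFun hWtW j) j
    rw [Matrix.mul_apply, Matrix.one_apply_eq] at h
    rw [← h]
    exact Finset.sum_congr rfl fun i _ => by rw [Matrix.transpose_apply, sq]
  -- determinant and inverse facts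
  have hdetP : Pstar.det = ∏ i, lam i := by
    simpa using hP.det_eq_prod_eigenvalues
  have hdetQ : Q.det = ∏ j, mu j := by
    simpa using hQ.det_eq_prod_eigenvalues
  have hPdet : IsUnit Pstar.det := by
    rw [hdetP]
    exact isUnit_iff_ne_zero.mpr (ne_of_gt (Finset.prod_pos fun i _ => hlam_pos i))
  have hPinv : Pstar⁻¹ = U * diagonal (fun i => (lam i)⁻¹) * Uᵀ := by
    apply Matrix.inv_eq_right_inv
    rw [hPspec,
      show U * diagonal lam * Uᵀ * (U * diagonal (fun i => (lam i)⁻¹) * Uᵀ)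
        = U * (diagonal lam * ((Uᵀ * U) * (diagonal (fun i => (lam i)⁻¹) * Uᵀ)))
        from by simp only [Matrix.mul_assoc],
      hU1, Matrix.one_mul,
      show U * (diagonal lam * (diagonal (fun i => (lam i)⁻¹) * Uᵀ))
        = U * ((diagonal lam * diagonal (fun i => (lam i)⁻¹)) * Uᵀ)
        from by simp only [Matrix.mul_assoc],
      Matrix.diagonal_mul_diagonal,
      show (fun i => lam i * (lam i)⁻¹) = fun _ : Fin n => (1:ℝ)
        from funext fun i => mul_inv_cancel₀ (ne_of_gt (hlam_pos i)),
      Matrix.diagonal_one, Matrix.one_mul, hU2]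
  -- log det
  have hlogP : Real.log Pstar.det = ∑ i, Real.log (lam i) := by
    rw [hdetP, Real.log_prod fun i _ => ne_of_gt (hlam_pos i)]
  have hlogQ : Real.log Q.det = ∑ j, Real.log (mu j) := by
    rw [hdetQ, Real.log_prod fun j _ => ne_of_gt (hmu_pos j)]
  -- traces
  have hPQtrace : (Pstar * Q).trace = ∑ i, ∑ j, lam i * mu j * (W i j)^2 := by
    rw [hPspec, hQspec, trace_conj_general]
  have hPinvQtrace : (Pstar⁻¹ * Q).trace = ∑ i, ∑ j, (lam i)⁻¹ * mu j * (W i j)^2 := by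
    rw [hPinv, hQspec, trace_conj_general]
  have hQQ : (Q * Q).trace = ∑ j, (mu j)^2 := by
    rw [hQspec, trace_conj_general, show Vᵀ * V = 1 from hV1]
    simp [Matrix.one_apply, Finset.sum_ite_eq, sq]
  have hPP : (Pstar * Pstar).trace = ∑ i, (lam i)^2 := by
    rw [hPspec, trace_conj_general, show Uᵀ * U = 1 from hU1]
    simp [Matrix.one_apply, Finset.sum_ite_eq, sq]
  -- the trace term in the goal
  have hTrace : ((Pstar⁻¹)ᵀ * Δ).trace = (∑ i, ∑ j, (lam i)⁻¹ * mu j * (W i j)^2) - (n:ℝ) := by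
    have ht : (Pstar⁻¹)ᵀ = Pstar⁻¹ := by rw [Matrix.transpose_nonsing_inv, hPsymm.eq]
    have hd : Pstar⁻¹ * Δ = Pstar⁻¹ * Q - 1 := by
      calc Pstar⁻¹ * Δ = Pstar⁻¹ * (Q - Pstar) := by rw [hQdef, add_sub_cancel_right]
        _ = Pstar⁻¹ * Q - Pstar⁻¹ * Pstar := by rw [Matrix.mul_sub]
        _ = Pstar⁻¹ * Q - 1 := by rw [Matrix.nonsing_inv_mul _ hPdet]
    rw [ht, hd, Matrix.trace_sub, Matrix.trace_one, hPinvQtrace]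
    simp
  -- Frobenius norm identity
  have hmusq : ∑ i, ∑ j, (mu j)^2 * (W i j)^2 = ∑ j, (mu j)^2 := by
    rw [Finset.sum_comm]
    exact Finset.sum_congr rfl fun j _ => by rw [← Finset.mul_sum, ccol j, mul_one]
  have hlamsq : ∑ i, ∑ j, (lam i)^2 * (W i j)^2 = ∑ i, (lam i)^2 := by
    exact Finset.sum_congr rfl fun i _ => by rw [← Finset.mul_sum, crow i, mul_one]
  have hRHS5 : ∑ i, ∑ j, (mu j - lam i)^2 * (W i j)^2
      = (∑ j, (mu j)^2) - 2 * (∑ i, ∑ j, lam i * mu j * (W i j)^2) + (∑ i, (lam i)^2) := by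
    have e1 : ∑ i, ∑ j, (mu j - lam i)^2 * (W i j)^2
        = (∑ i, ∑ j, ((mu j)^2 * (W i j)^2 - 2 * (lam i * mu j * (W i j)^2)
            + (lam i)^2 * (W i j)^2)) :=
      Finset.sum_congr rfl fun i _ => Finset.sum_congr rfl fun j _ => by ring
    have e2 : ∑ i, ∑ j, 2 * (lam i * mu j * (W i j)^2)
        = 2 * ∑ i, ∑ j, lam i * mu j * (W i j)^2 := by
      rw [Finset.mul_sum]
      exact Finset.sum_congr rfl fun i _ => by rw [Finset.mul_sum]
    rw [e1]
    simp only [Finset.sum_add_distrib, Finset.sum_sub_distrib]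
    rw [e2, hmusq, hlamsq]
  have hDD : (Δ * Δ).trace = ∑ i, ∑ j, (Δ i j)^2 := by
    simp only [Matrix.trace, Matrix.diag_apply, Matrix.mul_apply]
    refine Finset.sum_congr rfl fun i _ => Finset.sum_congr rfl fun j _ => ?_
    have h2 : Δ j i = Δ i j := congrFun (congrFun hΔsymm.eq i) j
    rw [h2, sq]
  have hDDsplit : (Δ * Δ).trace
      = (Q * Q).trace - 2 * (Pstar * Q).trace + (Pstar * Pstar).trace := by
    have hΔQ : Δ = Q - Pstar := by rw [hQdef, add_sub_cancel_right]
    rw [hΔQ, Matrix.sub_mul, Matrix.mul_sub, Matrix.mul_sub, Matrix.trace_sub,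
      Matrix.trace_sub, Matrix.trace_sub, Matrix.trace_mul_comm Q Pstar]
    ring
  have hFrob : ∑ i, ∑ j, (Δ i j)^2 = ∑ i, ∑ j, (mu j - lam i)^2 * (W i j)^2 := by
    rw [← hDD, hDDsplit, hQQ, hPP, hPQtrace, hRHS5]
  -- collapse sums
  have cS1 : ∑ i, ∑ j, Real.log (lam i) * (W i j)^2 = ∑ i, Real.log (lam i) :=
    Finset.sum_congr rfl fun i _ => by rw [← Finset.mul_sum, crow i, mul_one]
  have cS2 : ∑ i, ∑ j, Real.log (mu j) * (W i j)^2 = ∑ j, Real.log (mu j) := by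
    rw [Finset.sum_comm]
    exact Finset.sum_congr rfl fun j _ => by rw [← Finset.mul_sum, ccol j, mul_one]
  have cS4 : ∑ i, ∑ j, (W i j)^2 = (n:ℝ) := by
    calc ∑ i, ∑ j, (W i j)^2 = ∑ _i : Fin n, (1:ℝ) := Finset.sum_congr rfl fun i _ => crow i
      _ = (n:ℝ) := by simp
  -- the key inequality
  have KEY : 0 ≤ ∑ i, ∑ j, (Real.log (lam i) - Real.log (mu j) + (lam i)⁻¹ * mu j - 1
      - (mu j - lam i)^2 / (2*b^2)) * (W i j)^2 :=
    Finset.sum_nonneg fun i _ => Finset.sum_nonneg fun j _ =>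
      mul_nonneg (scalar_key hb (hlam_pos i) (hlam_le i) (hmu_pos j) (hmu_le j)) (sq_nonneg _)
  have split : ∑ i, ∑ j, (Real.log (lam i) - Real.log (mu j) + (lam i)⁻¹ * mu j - 1
        - (mu j - lam i)^2 / (2*b^2)) * (W i j)^2
      = (∑ i, ∑ j, Real.log (lam i) * (W i j)^2)
        - (∑ i, ∑ j, Real.log (mu j) * (W i j)^2)
        + (∑ i, ∑ j, (lam i)⁻¹ * mu j * (W i j)^2)
        - (∑ i, ∑ j, (W i j)^2)
        - (1/(2*b^2)) * (∑ i, ∑ j, (mu j - lam i)^2 * (W i j)^2) := by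
    have hdiv : (1/(2*b^2)) * (∑ i, ∑ j, (mu j - lam i)^2 * (W i j)^2)
        = ∑ i, ∑ j, ((mu j - lam i)^2 / (2*b^2)) * (W i j)^2 := by
      rw [Finset.mul_sum]
      refine Finset.sum_congr rfl fun i _ => ?_
      rw [Finset.mul_sum]
      exact Finset.sum_congr rfl fun j _ => by ring
    rw [hdiv]
    simp only [← Finset.sum_sub_distrib, ← Finset.sum_add_distrib]
    exact Finset.sum_congr rfl fun i _ => Finset.sum_congr rfl fun j _ => by ring
  rw [split] at KEY
  rw [hlogP, hlogQ, hTrace, hFrob]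
  linarith [KEY, cS1, cS2, cS4]
end

section
/- Let r, d, ĉ ∈ ℝ^{n²} satisfy ‖d‖² = n, dᵀr = n, ‖r‖² > n, and dᵀĉ > 0. Then the unique minimizer (θ̂_v, θ̂₀) of (1/2)‖θ_v r + θ₀ d − ĉ‖² over θ_v ≥ 0, θ₀ ≥ 0 is given by: (0, dᵀĉ/n) if rᵀĉ ≤ dᵀĉ; ((rᵀĉ − dᵀĉ)/(‖r‖² − n), (dᵀĉ·‖r‖²/n − rᵀĉ)/(‖r‖² − n)) if dᵀĉ < rᵀĉ < dᵀĉ·‖r‖²/n; and (rᵀĉ/‖r‖², 0) if rᵀĉ ≥ dᵀĉ·‖r‖²/n. -/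
lemma pos_aux (n rr u v g1 g2 : ℝ) (hn : 0 < n) (hrn : n < rr)
    (hg1 : 0 ≤ g1 * u) (hg2 : 0 ≤ g2 * v) (huv : u ≠ 0 ∨ v ≠ 0) :
    0 < g1 * u + g2 * v + (1/2) * (n * (u + v) ^ 2 + (rr - n) * u ^ 2) := by
  rcases eq_or_ne u 0 with rfl | hu
  · have hv : v ≠ 0 := by tauto
    have h2 : (0:ℝ) < v ^ 2 := by positivity
    nlinarith [sq_nonneg (0 + v)]
  · have h2 : (0:ℝ) < u ^ 2 := by positivity
    nlinarith [sq_nonneg (u + v)]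

/-- closed-form solution of the two-variable nonnegative least squares
problem `min_{θ_v ≥ 0, θ₀ ≥ 0} (1/2)‖θ_v r + θ₀ d - ĉ‖²` under ‖d‖² = n, dᵀr = n,
‖r‖² > n, dᵀĉ > 0, in the three KKT cases. -/
theorem stmt_11 {n : ℕ} (r d c : Fin (n ^ 2) → ℝ)
    (hd : ∑ i, (d i) ^ 2 = (n : ℝ))
    (hdr : ∑ i, d i * r i = (n : ℝ))
    (hr : (n : ℝ) < ∑ i, (r i) ^ 2)
    (hdc : 0 < ∑ i, d i * c i)
    (obj : ℝ → ℝ → ℝ)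
    (hobj : obj = fun θv θ0 => (1 / 2) * ∑ i, (θv * r i + θ0 * d i - c i) ^ 2)
    (rc dc rr : ℝ)
    (hrc : rc = ∑ i, r i * c i) (hdc' : dc = ∑ i, d i * c i)
    (hrr : rr = ∑ i, (r i) ^ 2) :
    (rc ≤ dc →
      ∀ θv θ0 : ℝ, 0 ≤ θv → 0 ≤ θ0 → (θv, θ0) ≠ ((0 : ℝ), dc / n) →
        obj 0 (dc / n) < obj θv θ0) ∧
    (dc < rc → rc < dc * rr / n →
      ∀ θv θ0 : ℝ, 0 ≤ θv → 0 ≤ θ0 →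
        (θv, θ0) ≠ ((rc - dc) / (rr - n), (dc * rr / n - rc) / (rr - n)) →
        obj ((rc - dc) / (rr - n)) ((dc * rr / n - rc) / (rr - n)) < obj θv θ0) ∧
    (dc * rr / n ≤ rc →
      ∀ θv θ0 : ℝ, 0 ≤ θv → 0 ≤ θ0 → (θv, θ0) ≠ (rc / rr, (0 : ℝ)) →
        obj (rc / rr) 0 < obj θv θ0) := by
  have hn0 : n ≠ 0 := by
    rintro rfl
    simp at hdc
  have hn : (0:ℝ) < n := by exact_mod_cast Nat.pos_of_ne_zero hn0
  have hnne : (n:ℝ) ≠ 0 := ne_of_gt hn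
  have hr' : (n:ℝ) < rr := hrr ▸ hr
  have hrrpos : 0 < rr := lt_trans hn hr'
  have hrn : rr - (n:ℝ) ≠ 0 := by linarith
  have key : ∀ x y : ℝ, obj x y
      = (1/2) * (x^2 * rr + 2*x*y*(n:ℝ) + y^2*(n:ℝ)) - x*rc - y*dc
        + (1/2) * ∑ i, (c i)^2 := by
    intro x y
    rw [hobj, hrc, hdc', hrr]
    simp only
    have h1 : ∀ i ∈ Finset.univ, (x * r i + y * d i - c i) ^ 2
        = x^2 * (r i)^2 + (2*x*y) * (d i * r i) + y^2 * (d i)^2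
          - (2*x) * (r i * c i) - (2*y) * (d i * c i) + (c i)^2 :=
      fun i _ => by ring
    rw [Finset.sum_congr rfl h1]
    simp only [Finset.sum_add_distrib, Finset.sum_sub_distrib, ← Finset.mul_sum]
    rw [hd, hdr]
    ring
  have diff : ∀ a b x y : ℝ, obj x y - obj a b
      = (a*rr + b*(n:ℝ) - rc) * (x - a) + ((a + b)*(n:ℝ) - dc) * (y - b)
        + (1/2) * ((n:ℝ) * ((x - a) + (y - b))^2 + (rr - (n:ℝ)) * (x - a)^2) := by
    intro a b x y
    rw [key, key]
    ring
  have split : ∀ (a b x y : ℝ), (x, y) ≠ (a, b) → x - a ≠ 0 ∨ y - b ≠ 0 := by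
    intro a b x y hne
    by_contra h
    push_neg at h
    exact hne (by
      have h1 := sub_eq_zero.mp h.1
      have h2 := sub_eq_zero.mp h.2
      simp [h1, h2])
  refine ⟨?_, ?_, ?_⟩
  · intro hle θv θ0 hv h0 hne
    rw [← sub_pos, diff]
    have e1 : (0:ℝ)*rr + (dc/n)*(n:ℝ) - rc = dc - rc := by field_simp; ring
    have e2 : ((0:ℝ) + dc/n)*(n:ℝ) - dc = 0 := by field_simp; ring
    rw [e1, e2]
    exact pos_aux _ _ _ _ _ _ hn hr'
      (mul_nonneg (by linarith) (by linarith)) (by simp)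
      (split _ _ _ _ hne)
  · intro h1 h2 θv θ0 hv h0 hne
    rw [← sub_pos, diff]
    have e1 : ((rc - dc)/(rr - n))*rr + ((dc * rr / n - rc)/(rr - n))*(n:ℝ) - rc = 0 := by
      field_simp
      ring
    have e2 : ((rc - dc)/(rr - n) + (dc * rr / n - rc)/(rr - n))*(n:ℝ) - dc = 0 := by
      field_simp
      ring
    rw [e1, e2]
    exact pos_aux _ _ _ _ _ _ hn hr' (by simp) (by simp) (split _ _ _ _ hne)
  · intro hle θv θ0 hv h0 hne
    rw [← sub_pos, diff]
    have e1 : (rc/rr)*rr + (0:ℝ)*(n:ℝ) - rc = 0 := by field_simp; ring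
    have e2 : (rc/rr + (0:ℝ))*(n:ℝ) - dc = (rc*(n:ℝ) - dc*rr)/rr := by
      field_simp
      ring
    rw [e1, e2]
    have hg2 : 0 ≤ (rc*(n:ℝ) - dc*rr)/rr := by
      apply div_nonneg _ (le_of_lt hrrpos)
      have : dc * rr ≤ rc * n := by
        rw [div_le_iff₀ hn] at hle
        linarith
      linarith
    exact pos_aux _ _ _ _ _ _ hn hr' (by simp)
      (mul_nonneg hg2 (by linarith)) (split _ _ _ _ hne)
end

section
/- Let Ψ(P) = ⟨S,P⟩ − log det(P) + 1_Q(P) where Q = {P symmetric : a·I ⪯ P ⪯ b·I} with 0 < a ≤ b < ∞. Suppose P̄ − (1/ρ)S has eigendecomposition U·diag(λ̄)·Uᵀ. Then the proximal map prox_{Ψ/ρ}(P̄) = argmin_P {Ψ(P) + (ρ/2)‖P − P̄‖_F²} equals U·diag(λ*)·Uᵀ, where λ*_i = max{min{(λ̄_i + √(λ̄_i² + 4/ρ))/2, b}, a} for each i (equivalently the clamped positive root of ρλ² − ρλ̄_iλ − 1 = 0). -/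
open Matrix

section helpers
variable {n : ℕ}

lemma trace_tmul_symm (X Y : Matrix (Fin n) (Fin n) ℝ) :
    Matrix.trace (Xᵀ * Y) = Matrix.trace (Yᵀ * X) := by
  rw [← Matrix.trace_transpose (Yᵀ * X), Matrix.transpose_mul, Matrix.transpose_transpose]

lemma sum_sq_eq_trace (X : Matrix (Fin n) (Fin n) ℝ) :
    ∑ i, ∑ j, (X i j) ^ 2 = Matrix.trace (Xᵀ * X) := by
  simp only [Matrix.trace, Matrix.diag, Matrix.mul_apply, Matrix.transpose_apply, sq]
  rw [Finset.sum_comm]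

lemma trace_sq_nonneg (X : Matrix (Fin n) (Fin n) ℝ) : 0 ≤ Matrix.trace (Xᵀ * X) := by
  rw [← sum_sq_eq_trace]; positivity

lemma trace_sq_pos {X : Matrix (Fin n) (Fin n) ℝ} (hX : X ≠ 0) :
    0 < Matrix.trace (Xᵀ * X) := by
  rw [← sum_sq_eq_trace]
  obtain ⟨i, hi⟩ : ∃ i, X i ≠ 0 := by
    by_contra h; push_neg at h; exact hX (funext h)
  obtain ⟨j, hj⟩ : ∃ j, X i j ≠ 0 := by
    by_contra h; push_neg at h; exact hi (funext h)
  have hrow : 0 < ∑ j, (X i j) ^ 2 :=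
    Finset.sum_pos' (fun k _ => sq_nonneg _) ⟨j, Finset.mem_univ j, by positivity⟩
  exact Finset.sum_pos' (fun k _ => Finset.sum_nonneg fun l _ => sq_nonneg _)
    ⟨i, Finset.mem_univ i, hrow⟩

lemma trace_sub_expand (X Y : Matrix (Fin n) (Fin n) ℝ) :
    Matrix.trace ((X - Y)ᵀ * (X - Y)) =
      Matrix.trace (Xᵀ * X) - 2 * Matrix.trace (Xᵀ * Y) + Matrix.trace (Yᵀ * Y) := by
  rw [Matrix.transpose_sub, Matrix.sub_mul, Matrix.mul_sub, Matrix.mul_sub,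
    Matrix.trace_sub, Matrix.trace_sub, Matrix.trace_sub, trace_tmul_symm Y X]
  ring

lemma trace_add_expand (X Y : Matrix (Fin n) (Fin n) ℝ) :
    Matrix.trace ((X + Y)ᵀ * (X + Y)) =
      Matrix.trace (Xᵀ * X) + 2 * Matrix.trace (Xᵀ * Y) + Matrix.trace (Yᵀ * Y) := by
  rw [Matrix.transpose_add, Matrix.add_mul, Matrix.mul_add, Matrix.mul_add,
    Matrix.trace_add, Matrix.trace_add, Matrix.trace_add, trace_tmul_symm Y X]
  ring

lemma conj_trace_sq {U : Matrix (Fin n) (Fin n) ℝ} (hU : Uᵀ * U = 1)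
    (Y : Matrix (Fin n) (Fin n) ℝ) :
    Matrix.trace ((U * Y * Uᵀ)ᵀ * (U * Y * Uᵀ)) = Matrix.trace (Yᵀ * Y) := by
  have hUU : U * Uᵀ = 1 := mul_eq_one_comm.mp hU
  calc Matrix.trace ((U * Y * Uᵀ)ᵀ * (U * Y * Uᵀ))
      = Matrix.trace (Uᵀᵀ * (Yᵀ * ((Uᵀ * U) * (Y * Uᵀ)))) := by
        simp only [Matrix.transpose_mul, Matrix.mul_assoc]
    _ = Matrix.trace (U * (Yᵀ * (Y * Uᵀ))) := by rw [hU, Matrix.one_mul, Matrix.transpose_transpose]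
    _ = Matrix.trace ((Yᵀ * (Y * Uᵀ)) * U) := Matrix.trace_mul_comm _ _
    _ = Matrix.trace (Yᵀ * Y) := by
        rw [Matrix.mul_assoc, Matrix.mul_assoc, hU, Matrix.mul_one]

lemma conj_det {U : Matrix (Fin n) (Fin n) ℝ} (hU : Uᵀ * U = 1)
    (Y : Matrix (Fin n) (Fin n) ℝ) : (U * Y * Uᵀ).det = Y.det := by
  have h1 : Uᵀ.det * U.det = 1 := by rw [← Matrix.det_mul, hU, Matrix.det_one]
  rw [Matrix.det_mul, Matrix.det_mul]
  calc U.det * Y.det * Uᵀ.det = (Uᵀ.det * U.det) * Y.det := by ring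
    _ = Y.det := by rw [h1, one_mul]

lemma trace_transpose_mul_diagonal (X : Matrix (Fin n) (Fin n) ℝ) (d : Fin n → ℝ) :
    Matrix.trace (Xᵀ * Matrix.diagonal d) = ∑ i, X i i * d i := by
  simp [Matrix.trace, Matrix.diag, Matrix.mul_diagonal]

lemma psd_diag_nonneg {N : Matrix (Fin n) (Fin n) ℝ} (hN : N.PosSemidef) (i : Fin n) :
    0 ≤ N i i := by
  have := hN.diag_nonneg (i := i)
  simpa [Matrix.mulVec_single, dotProduct, Pi.single_apply] using this

end helpers

section more
variable {n : ℕ}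

lemma quad_decomp (ρ : ℝ) (hρ : ρ ≠ 0) (S A X : Matrix (Fin n) (Fin n) ℝ) :
    Matrix.trace (Sᵀ * X) + ρ / 2 * ∑ i, ∑ j, (X i j - (A + ρ⁻¹ • S) i j) ^ 2
      = ρ / 2 * Matrix.trace ((X - A)ᵀ * (X - A))
        + (Matrix.trace (Aᵀ * S) + (2 * ρ)⁻¹ * Matrix.trace (Sᵀ * S)) := by
  have h1 : ∀ i j, X i j - (A + ρ⁻¹ • S) i j = ((X - A) - ρ⁻¹ • S) i j := by
    intro i j; simp [Matrix.sub_apply, Matrix.add_apply, Matrix.smul_apply]; ring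
  simp_rw [h1]
  rw [sum_sq_eq_trace, trace_sub_expand]
  have h2 : Matrix.trace ((X - A)ᵀ * ρ⁻¹ • S) = ρ⁻¹ * (Matrix.trace (Xᵀ * S) - Matrix.trace (Aᵀ * S)) := by
    rw [Matrix.mul_smul, Matrix.trace_smul, Matrix.transpose_sub, Matrix.sub_mul,
      Matrix.trace_sub]
    simp
  have h3 : Matrix.trace ((ρ⁻¹ • S)ᵀ * (ρ⁻¹ • S)) = ρ⁻¹ * ρ⁻¹ * Matrix.trace (Sᵀ * S) := by
    rw [Matrix.transpose_smul, Matrix.smul_mul, Matrix.mul_smul, Matrix.trace_smul,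
      Matrix.trace_smul]
    simp [mul_assoc]
  rw [h2, h3, trace_tmul_symm S X]
  field_simp
  ring

lemma logdet_psd_le {X : Matrix (Fin n) (Fin n) ℝ} (hX : X.PosSemidef) (hdet : 0 < X.det) :
    Real.log X.det ≤ X.trace - n := by
  have hH := hX.isHermitian
  have hdet' : X.det = ∏ i, hH.eigenvalues i := by
    simpa using hH.det_eq_prod_eigenvalues
  have htr : X.trace = ∑ i, hH.eigenvalues i := by
    nth_rewrite 1 [hH.spectral_theorem]
    rw [Unitary.conjStarAlgAut_apply, Matrix.trace_mul_comm, ← Matrix.mul_assoc]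
    have h1 : (star (hH.eigenvectorUnitary : Matrix (Fin n) (Fin n) ℝ)) *
        (hH.eigenvectorUnitary : Matrix (Fin n) (Fin n) ℝ) = 1 :=
      (Matrix.mem_unitaryGroup_iff').mp (hH.eigenvectorUnitary).2
    rw [h1, Matrix.one_mul]
    simp [Matrix.trace_diagonal]
  have hne : ∀ i ∈ Finset.univ, hH.eigenvalues i ≠ 0 := by
    have : (∏ i, hH.eigenvalues i) ≠ 0 := by rw [← hdet']; exact hdet.ne'
    intro i _
    exact Finset.prod_ne_zero_iff.mp this i (Finset.mem_univ i)
  have hpos : ∀ i, 0 < hH.eigenvalues i := fun i =>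
    lt_of_le_of_ne (hX.eigenvalues_nonneg i) (Ne.symm (hne i (Finset.mem_univ i)))
  rw [hdet', htr, Real.log_prod hne]
  calc ∑ i, Real.log (hH.eigenvalues i) ≤ ∑ i : Fin n, (hH.eigenvalues i - 1) :=
        Finset.sum_le_sum fun i _ => Real.log_le_sub_one_of_pos (hpos i)
    _ = ∑ i, hH.eigenvalues i - n := by rw [Finset.sum_sub_distrib]; simp

-- log det M ≤ log det (diagonal d) + ∑ (M i i - d i)/d i
lemma logdet_compare {M : Matrix (Fin n) (Fin n) ℝ} (hM : M.PosDef)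
    {d : Fin n → ℝ} (hd : ∀ i, 0 < d i) :
    Real.log M.det ≤ Real.log (Matrix.diagonal d).det
      + ∑ i, (M i i - d i) / d i := by
  set e : Fin n → ℝ := fun i => (Real.sqrt (d i))⁻¹ with he
  have hepos : ∀ i, 0 < e i := fun i => by
    have := Real.sqrt_pos.mpr (hd i); positivity
  have hesq : ∀ i, e i ^ 2 = (d i)⁻¹ := fun i => by
    show ((Real.sqrt (d i))⁻¹) ^ 2 = (d i)⁻¹
    rw [← Real.sqrt_inv]; exact Real.sq_sqrt (inv_nonneg.mpr (hd i).le)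
  set E : Matrix (Fin n) (Fin n) ℝ := Matrix.diagonal e with hE
  set X := E * M * E with hX
  have hXpsd : X.PosSemidef := by
    have h1 : X = E * M * Eᴴ := by
      rw [hX, Matrix.conjTranspose_eq_transpose_of_trivial, hE, Matrix.diagonal_transpose]
    rw [h1]
    exact hM.posSemidef.mul_mul_conjTranspose_same E
  have hdetE : E.det = ∏ i, e i := Matrix.det_diagonal
  have hdetX : X.det = (∏ i, e i) ^ 2 * M.det := by
    rw [hX, Matrix.det_mul, Matrix.det_mul, hdetE]; ring
  have hprodpos : 0 < ∏ i, e i := Finset.prod_pos fun i _ => hepos i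
  have hdetXpos : 0 < X.det := by
    rw [hdetX]; have := hM.det_pos; positivity
  have hXii : ∀ i, X i i = e i * M i i * e i := by
    intro i; rw [hX, hE, Matrix.mul_diagonal, Matrix.diagonal_mul]
  have htrX : X.trace = ∑ i, M i i / d i := by
    rw [Matrix.trace]
    apply Finset.sum_congr rfl
    intro i _
    rw [Matrix.diag, hXii i]
    have : e i * M i i * e i = M i i * e i ^ 2 := by ring
    rw [this, hesq i, div_eq_mul_inv]
  have hXdet2 : X.det = (∏ i, d i)⁻¹ * M.det := by
    rw [hdetX]
    congr 1
    rw [← Finset.prod_pow]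
    simp_rw [hesq]
    rw [← Finset.prod_inv_distrib]
  have hdpos : 0 < ∏ i, d i := Finset.prod_pos fun i _ => hd i
  have hlogX : Real.log X.det = Real.log M.det - Real.log (∏ i, d i) := by
    rw [hXdet2, Real.log_mul (by positivity) hM.det_pos.ne', Real.log_inv]
    ring
  have key := logdet_psd_le hXpsd hdetXpos
  rw [hlogX, htrX] at key
  rw [Matrix.det_diagonal]
  have hsum : ∑ i, (M i i - d i) / d i = (∑ i, M i i / d i) - n := by
    have : ∀ i ∈ Finset.univ, (M i i - d i) / d i = M i i / d i - 1 := by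
      intro i _
      rw [sub_div, div_self (hd i).ne']
    rw [Finset.sum_congr rfl this, Finset.sum_sub_distrib]
    simp
  linarith
end more



lemma scalar_key_s13 {ρ a b lam m : ℝ} (hρ : 0 < ρ) (ha : 0 < a) (hab : a ≤ b)
    (hm1 : a ≤ m) (hm2 : m ≤ b) :
    0 ≤ (m - max (min ((lam + Real.sqrt (lam ^ 2 + 4 / ρ)) / 2) b) a) *
      (ρ * (max (min ((lam + Real.sqrt (lam ^ 2 + 4 / ρ)) / 2) b) a - lam) -
        1 / max (min ((lam + Real.sqrt (lam ^ 2 + 4 / ρ)) / 2) b) a) := by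
  set s := Real.sqrt (lam ^ 2 + 4 / ρ) with hs_def
  have h4ρ : 0 < 4 / ρ := by positivity
  have hssq : s ^ 2 = lam ^ 2 + 4 / ρ := Real.sq_sqrt (by positivity)
  have hs_gt : |lam| < s := by
    have : Real.sqrt (lam ^ 2) < s := by
      apply Real.sqrt_lt_sqrt (by positivity); linarith
    simpa [Real.sqrt_sq_eq_abs] using this
  set t := (lam + s) / 2 with ht_def
  have ht_pos : 0 < t := by
    have := abs_nonneg lam
    have := neg_abs_le lam
    have : -lam < s := lt_of_le_of_lt (neg_le_abs lam) hs_gt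
    unfold t; linarith
  have ht_root : ρ * (t - lam) - 1 / t = 0 := by
    have h1 : ρ * (t - lam) * t = 1 := by
      have hexp : ρ * ((lam + s) / 2 - lam) * ((lam + s) / 2) = ρ * (s ^ 2 - lam ^ 2) / 4 := by
        ring
      rw [ht_def, hexp, hssq]
      field_simp
      ring
    have h2 : ρ * (t - lam) = 1 / t := by
      rw [eq_div_iff ht_pos.ne']; exact h1
    linarith
  -- monotonicity of h
  have hmono : ∀ x y : ℝ, 0 < x → x ≤ y →
      ρ * (x - lam) - 1 / x ≤ ρ * (y - lam) - 1 / y := by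
    intro x y hx hxy
    have hy : 0 < y := lt_of_lt_of_le hx hxy
    have : 1 / y ≤ 1 / x := one_div_le_one_div_of_le hx hxy
    nlinarith
  rcases le_or_gt t a with hta | hat
  · have hls : max (min t b) a = a := by
      rw [min_eq_left (le_trans hta hab), max_eq_right hta]
    rw [hls]
    have : 0 ≤ ρ * (a - lam) - 1 / a := by
      have := hmono t a ht_pos hta; linarith [ht_root]
    nlinarith
  · rcases le_or_gt b t with htb | htb
    · have hls : max (min t b) a = b := by
        rw [min_eq_right htb, max_eq_left hab]
      rw [hls]
      have hb : 0 < b := lt_of_lt_of_le ha hab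
      have : ρ * (b - lam) - 1 / b ≤ 0 := by
        have := hmono b t hb htb; linarith [ht_root]
      nlinarith
    · have hls : max (min t b) a = t := by
        rw [min_eq_left htb.le, max_eq_left hat.le]
      rw [hls, ht_root, mul_zero]


/-- the prox of `Ψ(P) = ⟨S,P⟩ - log det P + 1_Q(P)`,
`Q = {P symmetric : a·I ⪯ P ⪯ b·I}` (0 < a ≤ b), at P̄ is computed spectrally: if
`P̄ - (1/ρ)S = U diag(λ̄) Uᵀ` with U orthogonal, then the unique minimizer over Q of
`P ↦ ⟨S,P⟩ - log det P + (ρ/2)‖P - P̄‖_F²` is `U diag(λ*) Uᵀ`, where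
`λ*_i = max{min{(λ̄_i + √(λ̄_i² + 4/ρ))/2, b}, a}`. -/
theorem stmt_13 {n : ℕ} (S Pbar : Matrix (Fin n) (Fin n) ℝ) (ρ a b : ℝ)
    (hρ : 0 < ρ) (ha : 0 < a) (hab : a ≤ b)
    (hS : S.IsSymm) (hPbar : Pbar.IsSymm)
    (U : Matrix (Fin n) (Fin n) ℝ) (hU : Uᵀ * U = 1)
    (lam : Fin n → ℝ)
    (hdec : Pbar - ρ⁻¹ • S = U * Matrix.diagonal lam * Uᵀ)
    (lamstar : Fin n → ℝ)
    (hlamstar : ∀ i, lamstar i =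
      max (min ((lam i + Real.sqrt ((lam i) ^ 2 + 4 / ρ)) / 2) b) a)
    (Pstar : Matrix (Fin n) (Fin n) ℝ)
    (hPstar : Pstar = U * Matrix.diagonal lamstar * Uᵀ)
    (F : Matrix (Fin n) (Fin n) ℝ → ℝ)
    (hF : F = fun P => (Sᵀ * P).trace - Real.log P.det +
      ρ / 2 * ∑ i, ∑ j, (P i j - Pbar i j) ^ 2) :
    (Pstar.IsSymm ∧
      (Pstar - a • (1 : Matrix (Fin n) (Fin n) ℝ)).PosSemidef ∧
      (b • (1 : Matrix (Fin n) (Fin n) ℝ) - Pstar).PosSemidef) ∧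
    ∀ P : Matrix (Fin n) (Fin n) ℝ, P.IsSymm →
      (P - a • (1 : Matrix (Fin n) (Fin n) ℝ)).PosSemidef →
      (b • (1 : Matrix (Fin n) (Fin n) ℝ) - P).PosSemidef →
      P ≠ Pstar → F Pstar < F P := by
  have hUU : U * Uᵀ = 1 := mul_eq_one_comm.mp hU
  have hCT : Uᴴ = Uᵀ := Matrix.conjTranspose_eq_transpose_of_trivial U
  have hls_a : ∀ i, a ≤ lamstar i := fun i => by rw [hlamstar i]; exact le_max_right _ _
  have hls_b : ∀ i, lamstar i ≤ b := fun i => by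
    rw [hlamstar i]; exact max_le (min_le_right _ _) hab
  have hls_pos : ∀ i, 0 < lamstar i := fun i => lt_of_lt_of_le ha (hls_a i)
  -- conjugation of scalar matrices
  have hsmul : ∀ c : ℝ, U * (c • (1 : Matrix (Fin n) (Fin n) ℝ)) * Uᵀ = c • 1 := by
    intro c
    rw [Matrix.mul_smul, Matrix.mul_one, Matrix.smul_mul, hUU]
  have hdiagsub : ∀ (f : Fin n → ℝ) (c : ℝ),
      U * Matrix.diagonal f * Uᵀ - c • 1 = U * Matrix.diagonal (fun i => f i - c) * Uᵀ := by
    intro f c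
    have h1 : Matrix.diagonal (fun i => f i - c) =
        Matrix.diagonal f - c • (1 : Matrix (Fin n) (Fin n) ℝ) := by
      rw [Matrix.smul_one_eq_diagonal, Matrix.diagonal_sub]
    rw [h1, Matrix.mul_sub, Matrix.sub_mul, hsmul]
  have hdiagsub' : ∀ (f : Fin n → ℝ) (c : ℝ),
      c • 1 - U * Matrix.diagonal f * Uᵀ = U * Matrix.diagonal (fun i => c - f i) * Uᵀ := by
    intro f c
    have h1 : Matrix.diagonal (fun i => c - f i) =
        c • (1 : Matrix (Fin n) (Fin n) ℝ) - Matrix.diagonal f := by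
      rw [Matrix.smul_one_eq_diagonal, Matrix.diagonal_sub]
    rw [h1, Matrix.mul_sub, Matrix.sub_mul, hsmul]
  constructor
  · refine ⟨?_, ?_, ?_⟩
    · rw [hPstar]
      show (U * Matrix.diagonal lamstar * Uᵀ)ᵀ = U * Matrix.diagonal lamstar * Uᵀ
      simp [Matrix.transpose_mul, Matrix.diagonal_transpose, Matrix.mul_assoc]
    · rw [hPstar, hdiagsub, ← hCT]
      exact (Matrix.posSemidef_diagonal_iff.mpr
        (fun i => sub_nonneg.mpr (hls_a i))).mul_mul_conjTranspose_same U
    · rw [hPstar, hdiagsub', ← hCT]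
      exact (Matrix.posSemidef_diagonal_iff.mpr
        (fun i => sub_nonneg.mpr (hls_b i))).mul_mul_conjTranspose_same U
  · intro P hPsym hPa hPb hne
    set D := Matrix.diagonal lamstar with hD
    set Λ := Matrix.diagonal lam with hΛ
    set M := Uᵀ * P * U with hMdef
    have hPM : P = U * M * Uᵀ := by
      rw [hMdef]
      simp only [Matrix.mul_assoc]
      rw [hUU, Matrix.mul_one, ← Matrix.mul_assoc, hUU, Matrix.one_mul]
    have hMne : M ≠ D := by
      intro h; exact hne (by rw [hPM, h, hD, ← hPstar])
    have hconjdown : ∀ (N : Matrix (Fin n) (Fin n) ℝ) (c : ℝ),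
        Uᵀ * (N - c • 1) * U = Uᵀ * N * U - c • 1 := by
      intro N c
      rw [Matrix.mul_sub, Matrix.sub_mul]
      congr 1
      rw [Matrix.mul_smul, Matrix.mul_one, Matrix.smul_mul, hU]
    have hconjdown' : ∀ (N : Matrix (Fin n) (Fin n) ℝ) (c : ℝ),
        Uᵀ * (c • 1 - N) * U = c • 1 - Uᵀ * N * U := by
      intro N c
      rw [Matrix.mul_sub, Matrix.sub_mul]
      congr 1
      rw [Matrix.mul_smul, Matrix.mul_one, Matrix.smul_mul, hU]
    have hMa : (M - a • 1).PosSemidef := by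
      have := hPa.conjTranspose_mul_mul_same U
      rwa [hCT, hconjdown, ← hMdef] at this
    have hMb : (b • 1 - M).PosSemidef := by
      have := hPb.conjTranspose_mul_mul_same U
      rwa [hCT, hconjdown', ← hMdef] at this
    have hMiia : ∀ i, a ≤ M i i := by
      intro i
      have := psd_diag_nonneg hMa i
      simp only [Matrix.sub_apply, Matrix.smul_apply, Matrix.one_apply_eq, smul_eq_mul,
        mul_one] at this
      linarith
    have hMiib : ∀ i, M i i ≤ b := by
      intro i
      have := psd_diag_nonneg hMb i
      simp only [Matrix.sub_apply, Matrix.smul_apply, Matrix.one_apply_eq, smul_eq_mul,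
        mul_one] at this
      linarith
    have hMpd : M.PosDef := by
      have hA1 : (a • (1 : Matrix (Fin n) (Fin n) ℝ)).PosDef := by
        rw [Matrix.smul_one_eq_diagonal]
        exact Matrix.posDef_diagonal_iff.mpr fun i => ha
      have := Matrix.PosDef.posSemidef_add hMa hA1
      simpa using this
    have hPdet : P.det = M.det := by rw [hPM, conj_det hU]
    have hPstardet : Pstar.det = D.det := by rw [hPstar, conj_det hU, hD]
    have hDdetpos : 0 < D.det := by
      rw [hD, Matrix.det_diagonal]
      exact Finset.prod_pos fun i _ => hls_pos i
    -- Frobenius reductions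
    have hsubconj : ∀ Y Z : Matrix (Fin n) (Fin n) ℝ,
        U * Y * Uᵀ - U * Z * Uᵀ = U * (Y - Z) * Uᵀ := by
      intro Y Z; rw [← Matrix.sub_mul, ← Matrix.mul_sub]
    have t1 : Matrix.trace ((Pstar - U * Λ * Uᵀ)ᵀ * (Pstar - U * Λ * Uᵀ))
        = Matrix.trace ((D - Λ)ᵀ * (D - Λ)) := by
      rw [hPstar, hsubconj, conj_trace_sq hU]
    have t2 : Matrix.trace ((P - U * Λ * Uᵀ)ᵀ * (P - U * Λ * Uᵀ))
        = Matrix.trace ((M - Λ)ᵀ * (M - Λ)) := by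
      rw [hPM, hsubconj, conj_trace_sq hU]
    -- core diagonal inequality
    have hsplit : M - Λ = (M - D) + (D - Λ) := by abel
    have hexpand : Matrix.trace ((M - Λ)ᵀ * (M - Λ))
        = Matrix.trace ((M - D)ᵀ * (M - D)) + 2 * Matrix.trace ((M - D)ᵀ * (D - Λ))
          + Matrix.trace ((D - Λ)ᵀ * (D - Λ)) := by
      rw [hsplit, trace_add_expand]
    have hcross : Matrix.trace ((M - D)ᵀ * (D - Λ))
        = ∑ i, (M i i - lamstar i) * (lamstar i - lam i) := by
      have h1 : D - Λ = Matrix.diagonal (fun i => lamstar i - lam i) := by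
        rw [hD, hΛ, Matrix.diagonal_sub]
      rw [h1, trace_transpose_mul_diagonal]
      apply Finset.sum_congr rfl
      intro i _
      rw [hD]
      simp [Matrix.sub_apply, Matrix.diagonal_apply_eq]
    have hlog : Real.log M.det ≤ Real.log D.det + ∑ i, (M i i - lamstar i) / lamstar i := by
      rw [hD]; exact logdet_compare hMpd hls_pos
    have hterm : ∀ i, 0 ≤ (M i i - lamstar i) * (ρ * (lamstar i - lam i) - 1 / lamstar i) := by
      intro i
      have := scalar_key_s13 (ρ := ρ) (a := a) (b := b) (lam := lam i) (m := M i i)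
        hρ ha hab (hMiia i) (hMiib i)
      rwa [← hlamstar i] at this
    have hsum : ∑ i, (M i i - lamstar i) / lamstar i
        ≤ ρ * ∑ i, (M i i - lamstar i) * (lamstar i - lam i) := by
      rw [Finset.mul_sum]
      apply Finset.sum_le_sum
      intro i _
      have h1 := hterm i
      have h2 := hls_pos i
      have h3 : (M i i - lamstar i) / lamstar i = (M i i - lamstar i) * (1 / lamstar i) := by
        ring
      rw [h3]
      nlinarith
    have htr_pos : 0 < Matrix.trace ((M - D)ᵀ * (M - D)) :=
      trace_sq_pos (sub_ne_zero.mpr hMne)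
    have core : ρ / 2 * Matrix.trace ((D - Λ)ᵀ * (D - Λ)) - Real.log D.det
        < ρ / 2 * Matrix.trace ((M - Λ)ᵀ * (M - Λ)) - Real.log M.det := by
      rw [hexpand, hcross]
      nlinarith [hlog, hsum, htr_pos]
    -- assemble
    have hPbar' : Pbar = U * Λ * Uᵀ + ρ⁻¹ • S := by
      rw [← hdec, sub_add_cancel]
    have e1 := quad_decomp ρ hρ.ne' S (U * Λ * Uᵀ) Pstar
    have e2 := quad_decomp ρ hρ.ne' S (U * Λ * Uᵀ) P
    rw [t1] at e1
    rw [t2] at e2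
    simp only [hF]
    rw [hPbar', hPdet, hPstardet]
    linarith [core, e1, e2]
end

section
/- Suppose P̂ solves min_{P ≻ 0} ⟨S,P⟩ − log det(P) + α⟨G,|P|⟩, where S ⪰ 0, α > 0, and G has all entries ≥ G_min > 0. Then σ_max(P̂) ≤ n/(α·G_min) and σ_min(P̂) ≥ 1/(‖S‖₂ + α‖G‖_F). -/
open Matrix
open scoped Matrix.Norms.L2Operator

namespace Stmt15Aux
variable {n : ℕ}

lemma psd_smul {c : ℝ} (hc : 0 ≤ c) {M : Matrix (Fin n) (Fin n) ℝ}
    (hM : M.PosSemidef) : (c • M).PosSemidef := by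
  refine PosSemidef.of_dotProduct_mulVec_nonneg ?_ fun x => ?_
  · have := hM.1
    unfold Matrix.IsHermitian at *
    rw [conjTranspose_smul, this, star_trivial]
  · rw [smul_mulVec, dotProduct_smul, smul_eq_mul]
    exact mul_nonneg hc (by simpa using hM.dotProduct_mulVec_nonneg x)

lemma posdef_smul {c : ℝ} (hc : 0 < c) {M : Matrix (Fin n) (Fin n) ℝ}
    (hM : M.PosDef) : (c • M).PosDef := by
  refine PosDef.of_dotProduct_mulVec_pos ?_ fun x hx => ?_
  · have := hM.1
    unfold Matrix.IsHermitian at *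
    rw [conjTranspose_smul, this, star_trivial]
  · rw [smul_mulVec, dotProduct_smul, smul_eq_mul]
    exact mul_pos hc (by simpa using hM.dotProduct_mulVec_pos hx)

lemma trace_nonneg' {M : Matrix (Fin n) (Fin n) ℝ} (hM : M.PosSemidef) : 0 ≤ M.trace := by
  rw [Matrix.trace]
  refine Finset.sum_nonneg fun i _ => ?_
  have := hM.dotProduct_mulVec_nonneg (Pi.single i 1)
  simpa [dotProduct, mulVec, Pi.single_apply, Finset.mul_sum] using this

lemma vecMulVec_psd (x : Fin n → ℝ) : (vecMulVec x x).PosSemidef := by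
  refine PosSemidef.of_dotProduct_mulVec_nonneg ?_ fun y => ?_
  · ext i j
    simp [conjTranspose_apply, vecMulVec_apply, mul_comm]
  · have h : y ⬝ᵥ (vecMulVec x x *ᵥ y) = (∑ i, x i * y i) ^ 2 := by
      simp only [dotProduct, mulVec, vecMulVec_apply, pow_two, Finset.sum_mul_sum]
      rw [Finset.sum_comm]
      refine Finset.sum_congr rfl fun i _ => ?_
      rw [Finset.mul_sum]
      refine Finset.sum_congr rfl fun j _ => by ring
    simp only [star_trivial]
    rw [h]
    positivity

lemma trace_form (S : Matrix (Fin n) (Fin n) ℝ) (x : Fin n → ℝ) :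
    (Sᵀ * vecMulVec x x).trace = x ⬝ᵥ S *ᵥ x := by
  simp only [Matrix.trace, Matrix.diag, mul_apply, transpose_apply, vecMulVec_apply,
    dotProduct, mulVec]
  rw [Finset.sum_comm]
  refine Finset.sum_congr rfl fun k _ => ?_
  rw [Finset.mul_sum]
  refine Finset.sum_congr rfl fun i _ => by ring

lemma le_of_log_bound {q B : ℝ} (hq : 0 ≤ q)
    (h : ∀ ε : ℝ, 0 < ε → Real.log (1 + ε * q) ≤ ε * B) : q ≤ B := by
  have hB : 0 ≤ B := le_trans (Real.log_nonneg (by nlinarith : (1:ℝ) ≤ 1 + 1 * q))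
    (by simpa using h 1 one_pos)
  by_contra hc
  push_neg at hc
  have hq0 : 0 < q := lt_of_le_of_lt hB hc
  set ε : ℝ := (q - B) / (2 * q * (B + 1)) with hε
  have hεpos : 0 < ε := div_pos (by linarith) (by positivity)
  have hεB : ε * B ≤ 1 / 2 := by
    rw [hε, div_mul_eq_mul_div, div_le_div_iff₀ (by positivity) (by norm_num)]
    nlinarith
  have h1 : 1 + ε * q ≤ Real.exp (ε * B) := by
    have := h ε hεpos
    have hpos : (0:ℝ) < 1 + ε * q := by positivity
    calc 1 + ε * q = Real.exp (Real.log (1 + ε * q)) := (Real.exp_log hpos).symm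
      _ ≤ Real.exp (ε * B) := Real.exp_le_exp.mpr this
  have h2 : 1 - ε * B ≤ Real.exp (-(ε * B)) := by
    have := Real.add_one_le_exp (-(ε * B)); linarith
  have h3 : (1 + ε * q) * (1 - ε * B) ≤ 1 := by
    calc (1 + ε * q) * (1 - ε * B) ≤ Real.exp (ε * B) * Real.exp (-(ε * B)) := by
          apply mul_le_mul h1 h2 (by linarith) (Real.exp_nonneg _)
      _ = 1 := by rw [← Real.exp_add]; simp
  have key : q - B ≤ ε * q * B := by nlinarith
  rw [hε] at key
  have : (q - B) / (2 * q * (B + 1)) * q * B ≤ (q - B) / 2 := by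
    rw [div_mul_eq_mul_div, div_mul_eq_mul_div, div_le_div_iff₀ (by positivity) (by norm_num)]
    nlinarith
  linarith

lemma cs_bound (G : Matrix (Fin n) (Fin n) ℝ) (x : Fin n → ℝ) :
    ∑ i, ∑ j, G i j * |x i * x j| ≤
      Real.sqrt (∑ i, ∑ j, (G i j) ^ 2) * (∑ i, x i ^ 2) := by
  have key : (∑ p : Fin n × Fin n, G p.1 p.2 * |x p.1 * x p.2|) ^ 2 ≤
      (∑ p : Fin n × Fin n, (G p.1 p.2) ^ 2) * (∑ p : Fin n × Fin n, |x p.1 * x p.2| ^ 2) :=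
    Finset.sum_mul_sq_le_sq_mul_sq _ _ _
  have hx2 : (∑ p : Fin n × Fin n, |x p.1 * x p.2| ^ 2) = (∑ i, x i ^ 2) ^ 2 := by
    rw [Fintype.sum_prod_type, pow_two, Finset.sum_mul_sum]
    refine Finset.sum_congr rfl fun i _ => Finset.sum_congr rfl fun j _ => ?_
    rw [sq_abs]; ring
  rw [hx2] at key
  have hG : (∑ i, ∑ j, (G i j) ^ 2) = ∑ p : Fin n × Fin n, (G p.1 p.2) ^ 2 := by
    rw [Fintype.sum_prod_type]
  have hL : (∑ i, ∑ j, G i j * |x i * x j|) = ∑ p : Fin n × Fin n, G p.1 p.2 * |x p.1 * x p.2| := by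
    rw [Fintype.sum_prod_type]
  rw [hL, hG]
  set L := ∑ p : Fin n × Fin n, G p.1 p.2 * |x p.1 * x p.2|
  set A := ∑ p : Fin n × Fin n, (G p.1 p.2) ^ 2
  have hA : 0 ≤ A := Finset.sum_nonneg fun p _ => sq_nonneg _
  have hx : 0 ≤ ∑ i, x i ^ 2 := Finset.sum_nonneg fun i _ => sq_nonneg _
  calc L ≤ |L| := le_abs_self L
    _ = Real.sqrt (L ^ 2) := (Real.sqrt_sq_eq_abs L).symm
    _ ≤ Real.sqrt (A * (∑ i, x i ^ 2) ^ 2) := Real.sqrt_le_sqrt key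
    _ = Real.sqrt A * (∑ i, x i ^ 2) := by
        rw [Real.sqrt_mul hA, Real.sqrt_sq hx]

lemma quad_le (S : Matrix (Fin n) (Fin n) ℝ) (x : Fin n → ℝ) :
    x ⬝ᵥ S *ᵥ x ≤ ‖S‖ * ∑ i, x i ^ 2 := by
  set y : EuclideanSpace ℝ (Fin n) := (EuclideanSpace.equiv (Fin n) ℝ).symm x with hy
  set z : EuclideanSpace ℝ (Fin n) := (EuclideanSpace.equiv (Fin n) ℝ).symm (S *ᵥ x) with hz
  have h1 : x ⬝ᵥ S *ᵥ x = (inner ℝ y z : ℝ) := by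
    simp [hy, hz, PiLp.inner_apply, dotProduct, RCLike.inner_apply]
    exact Finset.sum_congr rfl fun i _ => mul_comm _ _
  have h2 : (inner ℝ y z : ℝ) ≤ ‖y‖ * ‖z‖ := real_inner_le_norm y z
  have h3 : ‖z‖ ≤ ‖S‖ * ‖y‖ := S.l2_opNorm_mulVec y
  have h4 : ‖y‖ ^ 2 = ∑ i, x i ^ 2 := by
    rw [EuclideanSpace.norm_eq, Real.sq_sqrt (Finset.sum_nonneg fun i _ => sq_nonneg _)]
    simp [hy, sq_abs]
  nlinarith [norm_nonneg y, norm_nonneg S, norm_nonneg z]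

lemma det_perturb {P : Matrix (Fin n) (Fin n) ℝ} (hP : P.PosDef) (ε : ℝ) (x : Fin n → ℝ) :
    (P + ε • vecMulVec x x).det = P.det * (1 + ε * (x ⬝ᵥ P⁻¹ *ᵥ x)) := by
  have hvv : ε • vecMulVec x x = replicateCol Unit (ε • x) * replicateRow Unit x := by
    rw [← vecMulVec_eq]
    ext i j
    simp [vecMulVec_apply]; ring
  rw [hvv, det_add_replicateCol_mul_replicateRow (isUnit_iff_ne_zero.mpr hP.det_pos.ne') (ε • x) x]
  congr 1
  rw [det_unique]
  simp only [Matrix.add_apply, one_apply_eq]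
  congr 1
  simp [mul_apply, replicateRow, replicateCol, dotProduct, mulVec, Finset.mul_sum, Finset.sum_mul]
  rw [Finset.sum_comm]
  exact Finset.sum_congr rfl fun i _ => Finset.sum_congr rfl fun j _ => by ring

lemma transpose_eq_self {S : Matrix (Fin n) (Fin n) ℝ} (hS : S.IsHermitian) : Sᵀ = S := by
  ext i j
  have := congrFun (congrFun hS i) j
  simpa [conjTranspose_apply] using this

lemma trace_mul_psd {S P : Matrix (Fin n) (Fin n) ℝ} (hS : S.PosSemidef)
    (hP : P.PosSemidef) : 0 ≤ (Sᵀ * P).trace := by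
  rw [transpose_eq_self hS.1]
  obtain ⟨N, hNH, hNN⟩ : ∃ N : Matrix (Fin n) (Fin n) ℝ, Nᴴ = N ∧ N * N = P :=
    open scoped MatrixOrder in ⟨CFC.sqrt P, (CFC.sqrt_nonneg P).posSemidef.1, CFC.sqrt_mul_sqrt_self P hP.nonneg⟩
  have h1 : S * P = S * N * N := by rw [mul_assoc, hNN]
  rw [h1, trace_mul_cycle]
  have h2 := trace_nonneg' (hS.conjTranspose_mul_mul_same N)
  rwa [hNH] at h2

lemma quad_abs_bound (P : Matrix (Fin n) (Fin n) ℝ) (x : Fin n → ℝ) :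
    x ⬝ᵥ P *ᵥ x ≤ (∑ i, ∑ j, |P i j|) * (∑ i, x i ^ 2) := by
  set S2 := ∑ i, x i ^ 2 with hS2
  have hxk : ∀ k, x k ^ 2 ≤ S2 :=
    fun k => Finset.single_le_sum (fun i _ => sq_nonneg (x i)) (Finset.mem_univ k)
  have expand : x ⬝ᵥ P *ᵥ x = ∑ i, ∑ j, x i * (P i j * x j) := by
    simp [dotProduct, mulVec, Finset.mul_sum]
  rw [expand, Finset.sum_mul]
  refine Finset.sum_le_sum fun i _ => ?_
  rw [Finset.sum_mul]
  refine Finset.sum_le_sum fun j _ => ?_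
  have h1 : x i * (P i j * x j) ≤ |P i j| * (|x i| * |x j|) := by
    calc x i * (P i j * x j) ≤ |x i * (P i j * x j)| := le_abs_self _
      _ = |P i j| * (|x i| * |x j|) := by rw [abs_mul, abs_mul]; ring
  have h2 : |x i| * |x j| ≤ S2 := by
    nlinarith [sq_nonneg (|x i| - |x j|), sq_abs (x i), sq_abs (x j), hxk i, hxk j,
      abs_nonneg (x i), abs_nonneg (x j)]
  exact h1.trans (mul_le_mul_of_nonneg_left h2 (abs_nonneg _))

lemma inv_lower {P : Matrix (Fin n) (Fin n) ℝ} (hP : P.PosDef) {c : ℝ} (hc : 0 < c)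
    (h : (c • (1 : Matrix (Fin n) (Fin n) ℝ) - P⁻¹).PosSemidef) :
    (P - (1 / c) • (1 : Matrix (Fin n) (Fin n) ℝ)).PosSemidef := by
  obtain ⟨N, hNH, hNN⟩ : ∃ N : Matrix (Fin n) (Fin n) ℝ, Nᴴ = N ∧ N * N = P :=
    open scoped MatrixOrder in ⟨CFC.sqrt P, (CFC.sqrt_nonneg P).posSemidef.1, CFC.sqrt_mul_sqrt_self P hP.posSemidef.nonneg⟩
  have hdetN : IsUnit N.det := by
    have h2 : N.det * N.det = P.det := by rw [← det_mul, hNN]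
    have := hP.det_pos
    refine isUnit_iff_ne_zero.mpr fun h0 => ?_
    rw [h0, mul_zero] at h2
    rw [← h2] at this
    exact lt_irrefl _ this
  have hinv : N * P⁻¹ * N = 1 := by
    have hPinv : P⁻¹ = N⁻¹ * N⁻¹ := by rw [← hNN, Matrix.mul_inv_rev]
    rw [hPinv, ← mul_assoc, mul_assoc (N * N⁻¹), Matrix.mul_nonsing_inv N hdetN,
      Matrix.nonsing_inv_mul N hdetN, one_mul]
  have key : N * (c • (1 : Matrix (Fin n) (Fin n) ℝ) - P⁻¹) * N = c • P - 1 := by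
    have e1 : N * (c • (1 : Matrix (Fin n) (Fin n) ℝ)) * N = c • P := by
      rw [Matrix.mul_smul, mul_one, Matrix.smul_mul, hNN]
    rw [Matrix.mul_sub, Matrix.sub_mul, e1, hinv]
  have hpsd : (c • P - 1).PosSemidef := by
    have h3 := h.mul_mul_conjTranspose_same N
    rw [hNH] at h3
    rwa [key] at h3
  have hfinal : P - (1 / c) • (1 : Matrix (Fin n) (Fin n) ℝ) = (1 / c) • (c • P - 1) := by
    rw [smul_sub, smul_smul, one_div, inv_mul_cancel₀ hc.ne', one_smul]
  rw [hfinal]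
  exact psd_smul (by positivity) hpsd

end Stmt15Aux


set_option maxHeartbeats 2000000 in
open Stmt15Aux in
/-- if P̂ ≻ 0 minimizes `⟨S,P⟩ - log det P + α⟨G,|P|⟩` over P ≻ 0, with
S ⪰ 0, α > 0 and all entries of G at least G_min > 0, then
`σ_max(P̂) ≤ n/(α G_min)` and `σ_min(P̂) ≥ 1/(‖S‖₂ + α‖G‖_F)`. -/
theorem stmt_15 {n : ℕ} (S G : Matrix (Fin n) (Fin n) ℝ) (α Gmin : ℝ)
    (hα : 0 < α) (hGmin : 0 < Gmin) (hG : ∀ i j, Gmin ≤ G i j)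
    (hS : S.PosSemidef)
    (F : Matrix (Fin n) (Fin n) ℝ → ℝ)
    (hF : F = fun P => (Sᵀ * P).trace - Real.log P.det +
      α * ∑ i, ∑ j, G i j * |P i j|)
    (Phat : Matrix (Fin n) (Fin n) ℝ) (hPhat : Phat.PosDef)
    (hopt : ∀ P : Matrix (Fin n) (Fin n) ℝ, P.PosDef → F Phat ≤ F P) :
    (((n : ℝ) / (α * Gmin)) • (1 : Matrix (Fin n) (Fin n) ℝ) - Phat).PosSemidef ∧
      (Phat - (1 / (‖S‖ + α * Real.sqrt (∑ i, ∑ j, (G i j) ^ 2))) •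
        (1 : Matrix (Fin n) (Fin n) ℝ)).PosSemidef := by
  subst hF
  rcases Nat.eq_zero_or_pos n with hn | hn
  · subst hn
    constructor <;>
      exact PosSemidef.of_dotProduct_mulVec_nonneg (by ext i j; exact i.elim0) fun x => by simp [dotProduct]
  haveI hNe : Nonempty (Fin n) := ⟨⟨0, hn⟩⟩
  -- trace and weighted-abs-sum of Phat
  have htr : 0 ≤ (Sᵀ * Phat).trace := trace_mul_psd hS hPhat.posSemidef
  have hsg : 0 ≤ ∑ i, ∑ j, G i j * |Phat i j| :=
    Finset.sum_nonneg fun i _ => Finset.sum_nonneg fun j _ =>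
      mul_nonneg (le_trans hGmin.le (hG i j)) (abs_nonneg _)
  -- scaling argument: complementarity bound
  have hcn : (Sᵀ * Phat).trace + α * ∑ i, ∑ j, G i j * |Phat i j| ≤ n := by
    by_contra hgt
    push_neg at hgt
    set c : ℝ := (Sᵀ * Phat).trace + α * ∑ i, ∑ j, G i j * |Phat i j| with hcdef
    have hc0 : 0 < c := lt_of_le_of_lt (Nat.cast_nonneg n) hgt
    set t : ℝ := ((n : ℝ) / c + 1) / 2 with htdef
    have hnc : (n : ℝ) / c < 1 := (div_lt_one hc0).mpr hgt
    have hnc0 : 0 ≤ (n : ℝ) / c := div_nonneg (Nat.cast_nonneg n) hc0.le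
    have ht0 : 0 < t := by rw [htdef]; linarith
    have ht1 : t < 1 := by rw [htdef]; linarith
    have htc : (n : ℝ) < t * c := by
      have hid : (n : ℝ) / c * c = n := div_mul_cancel₀ _ hc0.ne'
      rw [htdef]
      nlinarith [hid, hgt]
    have key := hopt (t • Phat) (posdef_smul ht0 hPhat)
    simp only at key
    have e1 : (Sᵀ * (t • Phat)).trace = t * (Sᵀ * Phat).trace := by
      rw [Matrix.mul_smul, trace_smul, smul_eq_mul]
    have e2 : Real.log (t • Phat).det = n * Real.log t + Real.log Phat.det := by
      rw [det_smul, Fintype.card_fin,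
        Real.log_mul (pow_ne_zero _ ht0.ne') hPhat.det_pos.ne', Real.log_pow]
    have e3 : ∑ i, ∑ j, G i j * |(t • Phat) i j| = t * ∑ i, ∑ j, G i j * |Phat i j| := by
      rw [Finset.mul_sum]
      refine Finset.sum_congr rfl fun i _ => ?_
      rw [Finset.mul_sum]
      refine Finset.sum_congr rfl fun j _ => ?_
      simp only [Matrix.smul_apply, smul_eq_mul]
      rw [abs_mul, abs_of_pos ht0]; ring
    rw [e1, e2, e3] at key
    have hkey2 : (n : ℝ) * Real.log t ≤ (t - 1) * c := by
      rw [hcdef]; nlinarith [key]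
    have hlog : (t - 1) / t ≤ Real.log t := by
      have h5 := Real.log_le_sub_one_of_pos (inv_pos.mpr ht0)
      rw [Real.log_inv] at h5
      have he : (t - 1) / t = 1 - t⁻¹ := by
        rw [sub_div, div_self ht0.ne', one_div]
      rw [he]
      linarith
    have h6 : (n : ℝ) * ((t - 1) / t) ≤ (n : ℝ) * Real.log t :=
      mul_le_mul_of_nonneg_left hlog (Nat.cast_nonneg n)
    have h7 : (n : ℝ) * ((t - 1) / t) ≤ (t - 1) * c := le_trans h6 hkey2
    rw [mul_div_assoc'] at h7
    rw [div_le_iff₀ ht0] at h7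
    nlinarith [h7, htc, ht1, mul_neg_of_neg_of_pos (show t - 1 < 0 by linarith)
      (show 0 < t * c - n by linarith)]
  -- Part A
  have hsum : ∑ i, ∑ j, |Phat i j| ≤ (n : ℝ) / (α * Gmin) := by
    have hlow : Gmin * ∑ i, ∑ j, |Phat i j| ≤ ∑ i, ∑ j, G i j * |Phat i j| := by
      rw [Finset.mul_sum]
      refine Finset.sum_le_sum fun i _ => ?_
      rw [Finset.mul_sum]
      exact Finset.sum_le_sum fun j _ => mul_le_mul_of_nonneg_right (hG i j) (abs_nonneg _)
    rw [le_div_iff₀ (by positivity)]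
    nlinarith [hlow, hcn, htr, hα]
  constructor
  · refine PosSemidef.of_dotProduct_mulVec_nonneg ?_ fun x => ?_
    · have h1 : (((n : ℝ) / (α * Gmin)) • (1 : Matrix (Fin n) (Fin n) ℝ)).IsHermitian := by
        unfold Matrix.IsHermitian
        rw [conjTranspose_smul, conjTranspose_one, star_trivial]
      exact h1.sub hPhat.isHermitian
    · simp only [star_trivial, sub_mulVec, dotProduct_sub, smul_mulVec, one_mulVec,
        dotProduct_smul, smul_eq_mul]
      have hq := quad_abs_bound Phat x
      have hxx : x ⬝ᵥ x = ∑ i, x i ^ 2 := by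
        simp [dotProduct, pow_two]
      have hS2 : 0 ≤ ∑ i, x i ^ 2 := Finset.sum_nonneg fun i _ => sq_nonneg _
      rw [hxx]
      nlinarith [hq, mul_le_mul_of_nonneg_right hsum hS2]
  -- Part B
  · set K : ℝ := ‖S‖ + α * Real.sqrt (∑ i, ∑ j, (G i j) ^ 2) with hKdef
    have hsq : 0 < ∑ i, ∑ j, (G i j) ^ 2 :=
      Finset.sum_pos (fun i _ => Finset.sum_pos (fun j _ => by nlinarith [hG i j])
        Finset.univ_nonempty) Finset.univ_nonempty
    have hK : 0 < K := by
      have := Real.sqrt_pos.mpr hsq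
      have := norm_nonneg S
      rw [hKdef]
      nlinarith
    have hqbound : ∀ x : Fin n → ℝ, x ⬝ᵥ Phat⁻¹ *ᵥ x ≤ K * ∑ i, x i ^ 2 := by
      intro x
      have hq0 : 0 ≤ x ⬝ᵥ Phat⁻¹ *ᵥ x := by simpa using hPhat.inv.posSemidef.dotProduct_mulVec_nonneg x
      have hlog : ∀ ε : ℝ, 0 < ε → Real.log (1 + ε * (x ⬝ᵥ Phat⁻¹ *ᵥ x)) ≤
          ε * (x ⬝ᵥ S *ᵥ x + α * ∑ i, ∑ j, G i j * |x i * x j|) := by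
        intro ε hε
        have hPε : (Phat + ε • vecMulVec x x).PosDef :=
          hPhat.add_posSemidef (psd_smul hε.le (vecMulVec_psd x))
        have key := hopt _ hPε
        simp only at key
        have e1 : (Sᵀ * (Phat + ε • vecMulVec x x)).trace =
            (Sᵀ * Phat).trace + ε * (x ⬝ᵥ S *ᵥ x) := by
          rw [mul_add, trace_add, Matrix.mul_smul, trace_smul, trace_form, smul_eq_mul]
        have e2 : Real.log (Phat + ε • vecMulVec x x).det =
            Real.log Phat.det + Real.log (1 + ε * (x ⬝ᵥ Phat⁻¹ *ᵥ x)) := by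
          rw [det_perturb hPhat ε x,
            Real.log_mul hPhat.det_pos.ne' (by nlinarith : (1:ℝ) + ε * (x ⬝ᵥ Phat⁻¹ *ᵥ x) ≠ 0)]
        have e3 : ∑ i, ∑ j, G i j * |(Phat + ε • vecMulVec x x) i j| ≤
            (∑ i, ∑ j, G i j * |Phat i j|) + ε * ∑ i, ∑ j, G i j * |x i * x j| := by
          rw [Finset.mul_sum, ← Finset.sum_add_distrib]
          refine Finset.sum_le_sum fun i _ => ?_
          rw [Finset.mul_sum, ← Finset.sum_add_distrib]
          refine Finset.sum_le_sum fun j _ => ?_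
          have hGn : 0 ≤ G i j := le_trans hGmin.le (hG i j)
          have habs : |(Phat + ε • vecMulVec x x) i j| ≤ |Phat i j| + ε * |x i * x j| := by
            simp only [Matrix.add_apply, Matrix.smul_apply, vecMulVec_apply, smul_eq_mul]
            calc |Phat i j + ε * (x i * x j)| ≤ |Phat i j| + |ε * (x i * x j)| := abs_add_le _ _
              _ = |Phat i j| + ε * |x i * x j| := by rw [abs_mul, abs_of_pos hε]
          calc G i j * |(Phat + ε • vecMulVec x x) i j|
              ≤ G i j * (|Phat i j| + ε * |x i * x j|) := mul_le_mul_of_nonneg_left habs hGn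
            _ = G i j * |Phat i j| + ε * (G i j * |x i * x j|) := by ring
        rw [e1, e2] at key
        have h8 := mul_le_mul_of_nonneg_left e3 hα.le
        linarith
      have hqB := le_of_log_bound hq0 hlog
      have h1 := quad_le S x
      have h2 := cs_bound G x
      have hS2 : 0 ≤ ∑ i, x i ^ 2 := Finset.sum_nonneg fun i _ => sq_nonneg _
      have h3 := mul_le_mul_of_nonneg_left h2 hα.le
      rw [hKdef]
      nlinarith
    have hKpsd : (K • (1 : Matrix (Fin n) (Fin n) ℝ) - Phat⁻¹).PosSemidef := by
      refine PosSemidef.of_dotProduct_mulVec_nonneg ?_ fun x => ?_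
      · have h1 : (K • (1 : Matrix (Fin n) (Fin n) ℝ)).IsHermitian := by
          unfold Matrix.IsHermitian
          rw [conjTranspose_smul, conjTranspose_one, star_trivial]
        exact h1.sub hPhat.isHermitian.inv
      · simp only [star_trivial, sub_mulVec, dotProduct_sub, smul_mulVec, one_mulVec,
          dotProduct_smul, smul_eq_mul]
        have hxx : x ⬝ᵥ x = ∑ i, x i ^ 2 := by simp [dotProduct, pow_two]
        rw [hxx]
        have := hqbound x
        linarith
    exact inv_lower hPhat hK hKpsd
end
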